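/- arXiv:math/0307022 — 5 statements merged into one kernel-verified Lean document; each statement's English description precedes it below -/
import Mathlib

section
/- In the universal enveloping algebra U(so(n,C)), define e_{ij}^q for q ≥ 1 by e_{ij}^q = Σ_{i_1,…,i_{q−1}} e_{i i_1} e_{i_1 i_2} ⋯ e_{i_{q−1} j} and e_{ij}^0 = δ_{ij}. Then for all k, l, i, j and all q ≥ 0, [e_{kl}, e_{ij}^q] = δ_{ki} e_{lj}^q + δ_{kj} e_{il}^q − δ_{il} e_{kj}^q − δ_{lj} e_{ik}^q. -/
/-- The iterated products `e_{ij}^q = Σ e_{i i₁} e_{i₁ i₂} ⋯ e_{i_{q-1} j}` in an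
associative algebra, with `e_{ij}^0 = δ_{ij}`. -/
def epow {n : ℕ} {R : Type*} [Ring R] (e : Fin n → Fin n → R) : ℕ → Fin n → Fin n → R
  | 0, i, j => if i = j then 1 else 0
  | q + 1, i, j => ∑ k : Fin n, e i k * epow e q k j

/-- In `U(so(n,ℂ))`, for all `k, l, i, j` and `q ≥ 0`:
`[e_{kl}, e_{ij}^q] = δ_{ki} e_{lj}^q + δ_{kj} e_{il}^q − δ_{il} e_{kj}^q − δ_{lj} e_{ik}^q`. -/
theorem stmt1 {n : ℕ} {R : Type*} [Ring R] [Algebra ℂ R] (e : Fin n → Fin n → R)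
    (hskew : ∀ i j, e i j = - e j i)
    (hdiag : ∀ i, e i i = 0)
    (hcomm : ∀ k l i j, e k l * e i j - e i j * e k l =
      (if k = i then e l j else 0) + (if k = j then e i l else 0)
        - (if i = l then e k j else 0) - (if l = j then e i k else 0)) :
    ∀ (q : ℕ) (k l i j : Fin n),
      e k l * epow e q i j - epow e q i j * e k l =
        (if k = i then epow e q l j else 0) + (if k = j then epow e q i l else 0)
          - (if i = l then epow e q k j else 0) - (if l = j then epow e q i k else 0) := by
  intro q
  induction q with
  | zero =>
    intro k l i j
    clear hcomm hskew hdiag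
    simp only [epow]
    split_ifs <;> subst_eqs <;> simp_all
  | succ q ih =>
    intro k l i j
    have key : ∀ m : Fin n, e k l * (e i m * epow e q m j) - (e i m * epow e q m j) * e k l =
        ((if k = i then e l m else 0) + (if k = m then e i l else 0)
          - (if i = l then e k m else 0) - (if l = m then e i k else 0)) * epow e q m j
        + e i m * ((if k = m then epow e q l j else 0) + (if k = j then epow e q m l else 0)
          - (if m = l then epow e q k j else 0) - (if l = j then epow e q m k else 0)) := by
      intro m
      rw [← hcomm, ← ih]
      noncomm_ring
    show e k l * (∑ m : Fin n, e i m * epow e q m j)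
        - (∑ m : Fin n, e i m * epow e q m j) * e k l = _
    rw [Finset.mul_sum, Finset.sum_mul, ← Finset.sum_sub_distrib,
      Finset.sum_congr rfl (fun m _ => key m)]
    simp only [add_mul, sub_mul, mul_add, mul_sub, ite_mul, mul_ite, zero_mul, mul_zero,
      Finset.sum_add_distrib, Finset.sum_sub_distrib, Finset.sum_ite_eq, Finset.sum_ite_eq',
      Finset.mem_univ, if_true]
    show _ = (if k = i then ∑ m : Fin n, e l m * epow e q m j else 0)
        + (if k = j then ∑ m : Fin n, e i m * epow e q m l else 0)
        - (if i = l then ∑ m : Fin n, e k m * epow e q m j else 0)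
        - (if l = j then ∑ m : Fin n, e i m * epow e q m k else 0)
    simp only [Finset.mul_sum, Finset.sum_ite_irrel, Finset.sum_const_zero]
    abel
end

section
/- The trace element c_q := Σ_{i=1}^n e_{ii}^q is central in U(so(n,C)); more precisely, [e_{kl}, c_q] = 0 for all generators e_{kl} of so(n,C) and all q ≥ 0. -/
/-- The key commutator formula: `[e_{kl}, e_{ij}^q] = δ_{ki} e_{lj}^q + δ_{kj} e_{il}^q
  - δ_{il} e_{kj}^q - δ_{lj} e_{ik}^q`, proved by induction on `q`. -/
lemma key {n : ℕ} {R : Type*} [Ring R] (e : Fin n → Fin n → R)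
    (hcomm : ∀ k l i j, e k l * e i j - e i j * e k l =
      (if k = i then e l j else 0) + (if k = j then e i l else 0)
        - (if i = l then e k j else 0) - (if l = j then e i k else 0)) :
    ∀ (q : ℕ) (k l i j : Fin n),
      e k l * epow e q i j - epow e q i j * e k l =
        (if k = i then epow e q l j else 0) + (if k = j then epow e q i l else 0)
          - (if i = l then epow e q k j else 0) - (if l = j then epow e q i k else 0) := by
  intro q
  induction q with
  | zero =>
    intro k l i j
    clear hcomm
    simp only [epow]
    split_ifs <;> subst_eqs <;> simp_all
  | succ q ih =>
    intro k l i j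
    simp only [epow]
    have expand : e k l * (∑ m : Fin n, e i m * epow e q m j)
        - (∑ m : Fin n, e i m * epow e q m j) * e k l
        = ∑ m : Fin n, ((e k l * e i m - e i m * e k l) * epow e q m j
            + e i m * (e k l * epow e q m j - epow e q m j * e k l)) := by
      rw [Finset.mul_sum, Finset.sum_mul, ← Finset.sum_sub_distrib]
      exact Finset.sum_congr rfl fun m _ => by noncomm_ring
    rw [expand]
    simp only [hcomm, ih]
    simp only [sub_mul, add_mul, ite_mul, zero_mul, mul_sub, mul_add, mul_ite, mul_zero,
      Finset.sum_add_distrib, Finset.sum_sub_distrib, ← Finset.mul_sum,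
      Finset.sum_ite_eq, Finset.sum_ite_eq', Finset.mem_univ, if_true]
    split_ifs <;> subst_eqs <;>
      simp_all only [not_true_eq_false, Finset.sum_const_zero, smul_zero] <;> abel

/-- The higher Casimir element `c_q := Σ_i e_{ii}^q` commutes with every generator
`e_{kl}` of `so(n,ℂ)` inside `U(so(n,ℂ))`, for all `q ≥ 0`. -/
theorem stmt3 {n : ℕ} {R : Type*} [Ring R] [Algebra ℂ R] (e : Fin n → Fin n → R)
    (hskew : ∀ i j, e i j = - e j i)
    (hdiag : ∀ i, e i i = 0)
    (hcomm : ∀ k l i j, e k l * e i j - e i j * e k l =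
      (if k = i then e l j else 0) + (if k = j then e i l else 0)
        - (if i = l then e k j else 0) - (if l = j then e i k else 0)) :
    ∀ (q : ℕ) (k l : Fin n),
      e k l * (∑ i : Fin n, epow e q i i) - (∑ i : Fin n, epow e q i i) * e k l = 0 := by
  intro q k l
  rw [Finset.mul_sum, Finset.sum_mul, ← Finset.sum_sub_distrib]
  have : ∀ i : Fin n, e k l * epow e q i i - epow e q i i * e k l =
      (if k = i then epow e q l i else 0) + (if k = i then epow e q i l else 0)
        - (if i = l then epow e q k i else 0) - (if l = i then epow e q i k else 0) :=
    fun i => key e hcomm q k l i i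
  simp only [this]
  simp only [Finset.sum_sub_distrib, Finset.sum_add_distrib,
    Finset.sum_ite_eq, Finset.sum_ite_eq', Finset.mem_univ, if_true]
  abel
end

section
/- The translated iterated products in U(so(n,C)) satisfy the key relation ê_{ij}^{q+1} = δ_{ji} ĉ_q − ê_{ji}^q − Σ_k ê_{kj}^q ê_{ki}, where ĉ_q := Σ_i ê_{ii}^q. -/
/-- The translated generators `ê_{ij} := e_{ij} + ((n−1)/2) δ_{ij}`. -/
noncomputable def ehat {n : ℕ} {R : Type*} [Ring R] [Algebra ℂ R]
    (e : Fin n → Fin n → R) (i j : Fin n) : R :=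
  e i j + (((n : ℂ) - 1) / 2) • (if i = j then (1 : R) else 0)

/-- The translated Casimir elements `ĉ_q := Σ_i ê_{ii}^q`. -/
noncomputable def chat {n : ℕ} {R : Type*} [Ring R] [Algebra ℂ R]
    (e : Fin n → Fin n → R) (q : ℕ) : R :=
  ∑ i : Fin n, epow (ehat e) q i i

section aux
variable {n : ℕ} {R : Type*} [Ring R]

lemma sum_ite_const' {c : Prop} [Decidable c] (g : Fin n → R) :
    (∑ a : Fin n, (if c then g a else 0)) = if c then ∑ a : Fin n, g a else 0 := by
  split_ifs <;> simp

/-- The commutator of a generator with an iterated product. -/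
lemma epow_comm' (f : Fin n → Fin n → R)
    (hc : ∀ k l i j, f k l * f i j - f i j * f k l =
      (if k = i then f l j else 0) + (if k = j then f i l else 0)
        - (if i = l then f k j else 0) - (if l = j then f i k else 0)) :
    ∀ (q : ℕ) (k l i j : Fin n),
      f k l * epow f q i j - epow f q i j * f k l =
      (if k = i then epow f q l j else 0) + (if k = j then epow f q i l else 0)
        - (if i = l then epow f q k j else 0) - (if l = j then epow f q i k else 0) := by
  intro q
  induction q with
  | zero =>
    intro k l i j
    clear hc
    simp only [epow]
    split_ifs <;> subst_vars <;> simp_all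
  | succ q IH =>
    intro k l i j
    have expand : f k l * epow f (q+1) i j - epow f (q+1) i j * f k l
        = ∑ a : Fin n, ((f k l * f i a - f i a * f k l) * epow f q a j
            + f i a * (f k l * epow f q a j - epow f q a j * f k l)) := by
      simp only [epow, Finset.mul_sum, Finset.sum_mul, ← Finset.sum_sub_distrib]
      apply Finset.sum_congr rfl
      intro a _
      noncomm_ring
    rw [expand]
    have step : ∀ a : Fin n, ((f k l * f i a - f i a * f k l) * epow f q a j
            + f i a * (f k l * epow f q a j - epow f q a j * f k l))
        = ((if k = i then f l a else 0) + (if k = a then f i l else 0)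
            - (if i = l then f k a else 0) - (if l = a then f i k else 0)) * epow f q a j
          + f i a * ((if k = a then epow f q l j else 0) + (if k = j then epow f q a l else 0)
            - (if a = l then epow f q k j else 0) - (if l = j then epow f q a k else 0)) := by
      intro a
      rw [hc k l i a, IH k l a j]
    simp only [step]
    have hE : ∀ i j : Fin n, (∑ a : Fin n, f i a * epow f q a j) = epow f (q+1) i j := by
      intro i j; simp [epow]
    simp only [add_mul, sub_mul, mul_add, mul_sub, ite_mul, mul_ite, zero_mul, mul_zero,
      Finset.sum_add_distrib, Finset.sum_sub_distrib, sum_ite_const',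
      Finset.sum_ite_eq, Finset.sum_ite_eq', Finset.mem_univ, if_true, hE]
    abel
end aux

section aux2
variable {n : ℕ} {R : Type*} [Ring R] [Algebra ℂ R]

/-- The translated generators satisfy the same commutation relations. -/
lemma ehat_comm (e : Fin n → Fin n → R)
    (hcomm : ∀ k l i j, e k l * e i j - e i j * e k l =
      (if k = i then e l j else 0) + (if k = j then e i l else 0)
        - (if i = l then e k j else 0) - (if l = j then e i k else 0))
    (k l i j : Fin n) :
    ehat e k l * ehat e i j - ehat e i j * ehat e k l =
      (if k = i then ehat e l j else 0) + (if k = j then ehat e i l else 0)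
        - (if i = l then ehat e k j else 0) - (if l = j then ehat e i k else 0) := by
  have key : ehat e k l * ehat e i j - ehat e i j * ehat e k l
      = e k l * e i j - e i j * e k l := by
    simp only [ehat]
    by_cases hkl : k = l <;> by_cases hij : i = j <;>
      simp only [if_pos, if_neg, hkl, hij, if_true, if_false, smul_zero, add_zero,
        mul_add, add_mul, smul_mul_assoc, mul_smul_comm, mul_one, one_mul] <;>
      module
  rw [key, hcomm k l i j]
  clear hcomm key
  simp only [ehat]
  split_ifs <;> simp_all [smul_zero]

/-- Skew-symmetry of the translated generators: `ê_{ij} = (n−1)δ_{ij} − ê_{ji}`. -/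
lemma ehat_skew (e : Fin n → Fin n → R)
    (hskew : ∀ i j, e i j = - e j i) (hdiag : ∀ i, e i i = 0) (i j : Fin n) :
    ehat e i j = (if i = j then ((n : ℂ) - 1) • (1 : R) else 0) - ehat e j i := by
  simp only [ehat]
  by_cases h : i = j
  · subst h
    simp only [if_pos rfl, hdiag, zero_add]
    rw [eq_sub_iff_add_eq, ← add_smul]
    congr 1
    ring
  · rw [if_neg h, if_neg h, if_neg (fun hh => h hh.symm), hskew i j]
    simp
end aux2

/-- The key relation `ê_{ij}^{q+1} = δ_{ji} ĉ_q − ê_{ji}^q − Σ_k ê_{kj}^q ê_{ki}`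
in `U(so(n,ℂ))`. -/
theorem stmt6 {n : ℕ} {R : Type*} [Ring R] [Algebra ℂ R] (e : Fin n → Fin n → R)
    (hskew : ∀ i j, e i j = - e j i)
    (hdiag : ∀ i, e i i = 0)
    (hcomm : ∀ k l i j, e k l * e i j - e i j * e k l =
      (if k = i then e l j else 0) + (if k = j then e i l else 0)
        - (if i = l then e k j else 0) - (if l = j then e i k else 0)) :
    ∀ (q : ℕ) (i j : Fin n),
      epow (ehat e) (q + 1) i j =
        (if j = i then chat e q else 0) - epow (ehat e) q j i
          - ∑ k : Fin n, epow (ehat e) q k j * ehat e k i := by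
  intro q i j
  have hA := epow_comm' (ehat e) (fun k l i j => ehat_comm e hcomm k l i j) q
  have key : ∀ k : Fin n, epow (ehat e) q k j * ehat e k i
      = epow (ehat e) q k j * (if k = i then ((n : ℂ) - 1) • (1 : R) else 0)
        - (ehat e i k * epow (ehat e) q k j
           - ((if i = k then epow (ehat e) q k j else 0)
              + (if i = j then epow (ehat e) q k k else 0)
              - (if k = k then epow (ehat e) q i j else 0)
              - (if k = j then epow (ehat e) q k i else 0))) := by
    intro k
    rw [ehat_skew e hskew hdiag k i, ← hA i k k j]
    noncomm_ring
  rw [Finset.sum_congr rfl (fun k _ => key k)]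
  have hE : (∑ k : Fin n, ehat e i k * epow (ehat e) q k j) = epow (ehat e) (q+1) i j := by
    simp [epow]
  have hchat : (∑ k : Fin n, epow (ehat e) q k k) = chat e q := rfl
  simp only [mul_ite, mul_zero, if_pos rfl, eq_self_iff_true, if_true,
    Finset.sum_sub_distrib, Finset.sum_add_distrib, sum_ite_const',
    Finset.sum_ite_eq, Finset.sum_ite_eq', Finset.mem_univ, hE, hchat,
    Finset.sum_const, Finset.card_univ, Fintype.card_fin, mul_smul_comm, mul_one]
  have hiff : (if j = i then chat e q else 0) = (if i = j then chat e q else 0) := by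
    simp [eq_comm]
  rw [hiff, ← Nat.cast_smul_eq_nsmul ℂ n (epow (ehat e) q i j)]
  module
end

section
/- With p^ρ_λ(ξ)φ := Π^ρ_λ(φ ⊗ ξ) the Clifford homomorphisms defined by orthogonal projections onto irreducible summands V_λ of V_ρ ⊗ C^n, the relation Σ_i p^ρ_λ(e_i) π_ρ(e_{ij}) = w(ρ;λ) p^ρ_λ(e_j) holds for each j, where the conformal weight is w(ρ;λ) = (1/2)(⟨δ+λ, δ+λ⟩ − ⟨δ+ρ, δ+ρ⟩ − n + 1). -/
/-- Conformal weights and Clifford homomorphisms.  `V` is the family of irreducible summands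
`V_λ` of `V_ρ ⊗ ℂⁿ`, `p l i` is the Clifford homomorphism `p^ρ_λ(e_i) : V_ρ → V_λ`,
`ρw`, `lw l`, `δw` are the highest weights `ρ`, `λ` and the half-sum of positive roots `δ`
(vectors in Euclidean space `ℝ^m`).  The representations have the correct Casimir eigenvalues
`2⟨δ+ρ,δ+ρ⟩ − 2⟨δ,δ⟩`, and the Clifford homomorphisms are `so(n)`-equivariant:
`δ_{ki} p^ρ_λ(e_l) − δ_{li} p^ρ_λ(e_k) = π_λ(e_{kl}) p^ρ_λ(e_i) − p^ρ_λ(e_i) π_ρ(e_{kl})`.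
Then `Σ_i p^ρ_λ(e_i) π_ρ(e_{ij}) = w(ρ;λ) p^ρ_λ(e_j)` with
`w(ρ;λ) = (1/2)(⟨δ+λ,δ+λ⟩ − ⟨δ+ρ,δ+ρ⟩ − n + 1)`. -/
theorem stmt11 {n m N : ℕ} {Vρ : Type*} [AddCommGroup Vρ] [Module ℂ Vρ]
    (V : Fin N → Type*) [∀ l, AddCommGroup (V l)] [∀ l, Module ℂ (V l)]
    (ρw : Fin m → ℝ) (lw : Fin N → Fin m → ℝ) (δw : Fin m → ℝ)
    (πρ : Fin n → Fin n → Module.End ℂ Vρ)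
    (πl : ∀ l, Fin n → Fin n → Module.End ℂ (V l))
    (p : ∀ l, Fin n → (Vρ →ₗ[ℂ] V l))
    (hskewρ : ∀ i j, πρ i j = - πρ j i)
    (hskewl : ∀ l i j, πl l i j = - πl l j i)
    (hcasρ : ∑ i : Fin n, ∑ j : Fin n, πρ i j * πρ j i =
      (((2 * ∑ i : Fin m, (δw i + ρw i) ^ 2 - 2 * ∑ i : Fin m, (δw i) ^ 2 : ℝ) : ℂ)) •
        (1 : Module.End ℂ Vρ))
    (hcasl : ∀ l, ∑ i : Fin n, ∑ j : Fin n, πl l i j * πl l j i =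
      (((2 * ∑ i : Fin m, (δw i + lw l i) ^ 2 - 2 * ∑ i : Fin m, (δw i) ^ 2 : ℝ) : ℂ)) •
        (1 : Module.End ℂ (V l)))
    (hequiv : ∀ l (k k' i : Fin n),
      (if k = i then p l k' else 0) - (if k' = i then p l k else 0) =
        (πl l k k') ∘ₗ (p l i) - (p l i) ∘ₗ (πρ k k')) :
    ∀ l (j : Fin n),
      ∑ i : Fin n, (p l i) ∘ₗ (πρ i j) =
        ((((1 : ℝ) / 2) * ((∑ i : Fin m, (δw i + lw l i) ^ 2)
            - (∑ i : Fin m, (δw i + ρw i) ^ 2) - (n : ℝ) + 1) : ℝ) : ℂ) • p l j := by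

  intro l j
  -- pointwise equivariance
  have hE : ∀ (k k' i : Fin n) (v : Vρ), πl l k k' (p l i v) =
      p l i (πρ k k' v) +
        ((if k = i then p l k' v else 0) - (if k' = i then p l k v else 0)) := by
    intro k k' i v
    have h := congrArg (fun g : Vρ →ₗ[ℂ] V l => g v) (hequiv l k k' i)
    simp only [LinearMap.sub_apply, LinearMap.coe_comp, Function.comp_apply,
      apply_ite (fun g : Vρ →ₗ[ℂ] V l => g v), LinearMap.zero_apply] at h
    rw [h]; abel
  -- pointwise Casimirs
  have hcasρ' : ∀ v : Vρ, ∑ k : Fin n, ∑ k' : Fin n, πρ k k' (πρ k' k v) =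
      (((2 * ∑ i : Fin m, (δw i + ρw i) ^ 2 - 2 * ∑ i : Fin m, (δw i) ^ 2 : ℝ) : ℂ)) • v := by
    intro v
    have h := congrArg (fun g : Module.End ℂ Vρ => g v) hcasρ
    simpa [LinearMap.sum_apply, Module.End.mul_apply] using h
  have hcasl' : ∀ w : V l, ∑ k : Fin n, ∑ k' : Fin n, πl l k k' (πl l k' k w) =
      (((2 * ∑ i : Fin m, (δw i + lw l i) ^ 2 - 2 * ∑ i : Fin m, (δw i) ^ 2 : ℝ) : ℂ)) • w := by
    intro w
    have h := congrArg (fun g : Module.End ℂ (V l) => g w) (hcasl l)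
    simpa [LinearMap.sum_apply, Module.End.mul_apply] using h
  apply LinearMap.ext; intro v
  simp only [LinearMap.sum_apply, LinearMap.coe_comp, Function.comp_apply,
    LinearMap.smul_apply]
  -- abbreviations
  set Sv : V l := ∑ i : Fin n, p l i (πρ i j v) with hSv
  set x : V l := p l j v with hx
  set cρ : ℂ := (((2 * ∑ i : Fin m, (δw i + ρw i) ^ 2 - 2 * ∑ i : Fin m, (δw i) ^ 2 : ℝ) : ℂ))
    with hcρ
  set cL : ℂ := (((2 * ∑ i : Fin m, (δw i + lw l i) ^ 2 - 2 * ∑ i : Fin m, (δw i) ^ 2 : ℝ) : ℂ))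
    with hcL
  have hA : ∑ k : Fin n, πl l k j (p l k v) = Sv + ((n : ℂ) - 1) • x := by
    have : ∀ k : Fin n, πl l k j (p l k v) =
        p l k (πρ k j v) + ((if k = k then p l j v else 0) - (if j = k then p l k v else 0)) :=
      fun k => hE k j k v
    rw [Finset.sum_congr rfl fun k _ => this k]
    simp only [if_pos rfl, Finset.sum_add_distrib, Finset.sum_sub_distrib,
      Finset.sum_ite_eq, Finset.mem_univ, if_true, Finset.sum_const, Finset.card_univ,
      Fintype.card_fin, ← hSv, ← hx]
    rw [sub_smul, one_smul, Nat.cast_smul_eq_nsmul]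
  -- expansion of each Casimir term
  have hterm : ∀ k k' : Fin n, πl l k k' (πl l k' k (p l j v)) =
      (p l j (πρ k k' (πρ k' k v)) +
        ((if k = j then p l k' (πρ k' k v) else 0) - (if k' = j then p l k (πρ k' k v) else 0)))
      + ((if k' = j then πl l k k' (p l k v) else 0)
          - (if k = j then πl l k k' (p l k' v) else 0)) := by
    intro k k'
    rw [hE k' k j v, map_add, map_sub, hE k k' j (πρ k' k v)]
    simp only [apply_ite (πl l k k'), map_zero]
  have hP2 : ∑ k : Fin n, ∑ k' : Fin n, (if k = j then p l k' (πρ k' k v) else 0) = Sv := by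
    rw [Finset.sum_comm]
    simp [Finset.sum_ite_eq', ← hSv]
  have hP3 : ∑ k : Fin n, ∑ k' : Fin n, (if k' = j then p l k (πρ k' k v) else 0) = -Sv := by
    have h1 : ∀ k : Fin n, p l k (πρ j k v) = -(p l k (πρ k j v)) := by
      intro k
      rw [hskewρ j k]
      simp
    simp only [Finset.sum_ite_eq', Finset.mem_univ, if_true, h1, Finset.sum_neg_distrib, ← hSv]
  have hP4 : ∑ k : Fin n, ∑ k' : Fin n, (if k' = j then πl l k k' (p l k v) else 0)
      = Sv + ((n : ℂ) - 1) • x := by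
    simp only [Finset.sum_ite_eq', Finset.mem_univ, if_true]
    exact hA
  have hP5 : ∑ k : Fin n, ∑ k' : Fin n, (if k = j then πl l k k' (p l k' v) else 0)
      = -(Sv + ((n : ℂ) - 1) • x) := by
    rw [Finset.sum_comm]
    have h1 : ∀ k' : Fin n, πl l j k' (p l k' v) = -(πl l k' j (p l k' v)) := by
      intro k'
      rw [hskewl l j k']
      simp
    simp only [Finset.sum_ite_eq', Finset.mem_univ, if_true, h1, Finset.sum_neg_distrib]
    rw [hA]
  have hP1 : ∑ k : Fin n, ∑ k' : Fin n, p l j (πρ k k' (πρ k' k v)) = cρ • x := by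
    simp_rw [← map_sum]
    rw [hcasρ' v, map_smul]
  -- the key identity
  have hsum : cL • x = cρ • x + ((4 : ℂ) • Sv + (2 * ((n : ℂ) - 1)) • x) := by
    rw [← hcasl' (p l j v), ← hx]
    rw [Finset.sum_congr rfl fun k _ => Finset.sum_congr rfl fun k' _ => hterm k k']
    simp only [Finset.sum_add_distrib, Finset.sum_sub_distrib]
    rw [hP1, hP2, hP3, hP4, hP5]
    module
  have h4 : (4 : ℂ) • Sv = (cL - cρ - 2 * ((n : ℂ) - 1)) • x := by
    rw [sub_smul, sub_smul, hsum]
    abel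
  have : Sv = ((1 / 4 : ℂ) * (cL - cρ - 2 * ((n : ℂ) - 1))) • x := by
    rw [mul_smul, ← h4, smul_smul]
    norm_num
  rw [this]
  congr 1
  rw [hcL, hcρ]
  push_cast
  ring
end

section
/- The Clifford homomorphisms satisfy Σ_λ w(ρ;λ)^q p^ρ_λ(e_i)* p^ρ_λ(e_j) = π_ρ(e_{ij}^q) for all q ≥ 0 and all i, j; in particular for q = 0, Σ_λ p^ρ_λ(e_j)* p^ρ_λ(e_i) = δ_{ji} id, and taking traces over i = j gives Σ_λ w(ρ;λ)^q Σ_i p^ρ_λ(e_i)* p^ρ_λ(e_i) = π_ρ(c_q). -/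
lemma epow_succ_right {n : ℕ} {R : Type*} [Ring R] (e : Fin n → Fin n → R) (q : ℕ) :
    ∀ i j, epow e (q + 1) i j = ∑ k : Fin n, epow e q i k * e k j := by
  induction q with
  | zero =>
    intro i j
    simp [epow, Finset.sum_ite_eq, Finset.sum_ite_eq']
  | succ q ih =>
    intro i j
    calc epow e (q + 2) i j = ∑ k : Fin n, e i k * epow e (q + 1) k j := rfl
      _ = ∑ k : Fin n, e i k * ∑ m : Fin n, epow e q k m * e m j := by
          simp only [ih]
      _ = ∑ m : Fin n, (∑ k : Fin n, e i k * epow e q k m) * e m j := by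
          simp_rw [Finset.mul_sum, Finset.sum_mul, mul_assoc]
          rw [Finset.sum_comm]
      _ = ∑ m : Fin n, epow e (q + 1) i m * e m j := rfl

/-- The Clifford homomorphisms `p^ρ_λ` satisfy
`Σ_λ w(ρ;λ)^q p^ρ_λ(e_i)* p^ρ_λ(e_j) = π_ρ(e_{ij}^q)` for all `q ≥ 0` and all `i, j`;
in particular `Σ_λ p^ρ_λ(e_j)* p^ρ_λ(e_i) = δ_{ji} id` (the completeness relation), and taking
traces over `i = j` gives `Σ_λ w(ρ;λ)^q Σ_i p^ρ_λ(e_i)* p^ρ_λ(e_i) = π_ρ(c_q)`.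
Here the completeness relation and the conformal-weight relation
`Σ_i p^ρ_λ(e_i) π_ρ(e_{ij}) = w(ρ;λ) p^ρ_λ(e_j)` characterize the data. -/
theorem stmt12 {n N : ℕ}
    {Vρ : Type*} [NormedAddCommGroup Vρ] [InnerProductSpace ℂ Vρ] [FiniteDimensional ℂ Vρ]
    (V : Fin N → Type*) [∀ l, NormedAddCommGroup (V l)] [∀ l, InnerProductSpace ℂ (V l)]
    [∀ l, FiniteDimensional ℂ (V l)]
    (p : ∀ l, Fin n → (Vρ →ₗ[ℂ] V l)) (w : Fin N → ℝ)
    (πρ : Fin n → Fin n → Module.End ℂ Vρ)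
    (hcomplete : ∀ i j : Fin n,
      (∑ l, (LinearMap.adjoint (p l j)) ∘ₗ (p l i) : Module.End ℂ Vρ) =
        if j = i then 1 else 0)
    (hw : ∀ l (j : Fin n),
      ∑ i : Fin n, (p l i) ∘ₗ (πρ i j) = ((w l : ℂ)) • p l j) :
    (∀ (q : ℕ) (i j : Fin n),
      (∑ l, ((w l : ℂ) ^ q) • ((LinearMap.adjoint (p l i)) ∘ₗ (p l j)) : Module.End ℂ Vρ) =
        epow πρ q i j) ∧
    (∀ q : ℕ,
      (∑ l, ((w l : ℂ) ^ q) •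
          (∑ i : Fin n, (LinearMap.adjoint (p l i)) ∘ₗ (p l i)) : Module.End ℂ Vρ) =
        ∑ i : Fin n, epow πρ q i i) := by
  have main : ∀ (q : ℕ) (i j : Fin n),
      (∑ l, ((w l : ℂ) ^ q) • ((LinearMap.adjoint (p l i)) ∘ₗ (p l j)) : Module.End ℂ Vρ) =
        epow πρ q i j := by
    intro q
    induction q with
    | zero =>
      intro i j
      simpa [epow] using hcomplete j i
    | succ q ih =>
      intro i j
      have key : ∀ l, ((w l : ℂ) ^ (q + 1)) •
          ((LinearMap.adjoint (p l i)) ∘ₗ (p l j) : Module.End ℂ Vρ) =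
          ∑ k : Fin n, (((w l : ℂ) ^ q) •
            ((LinearMap.adjoint (p l i)) ∘ₗ (p l k) : Module.End ℂ Vρ)) ∘ₗ πρ k j := by
        intro l
        have h1 : ((w l : ℂ)) • ((LinearMap.adjoint (p l i)) ∘ₗ (p l j) : Module.End ℂ Vρ) =
            ∑ k : Fin n, ((LinearMap.adjoint (p l i)) ∘ₗ (p l k) : Module.End ℂ Vρ) ∘ₗ πρ k j := by
          calc ((w l : ℂ)) • ((LinearMap.adjoint (p l i)) ∘ₗ (p l j) : Module.End ℂ Vρ)
              = (LinearMap.adjoint (p l i)) ∘ₗ (((w l : ℂ)) • p l j) := by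
                ext x; simp
            _ = (LinearMap.adjoint (p l i)) ∘ₗ (∑ k : Fin n, (p l k) ∘ₗ (πρ k j)) := by
                rw [hw l j]
            _ = ∑ k : Fin n, ((LinearMap.adjoint (p l i)) ∘ₗ (p l k) : Module.End ℂ Vρ) ∘ₗ πρ k j := by
                ext x; simp
        calc ((w l : ℂ) ^ (q + 1)) •
            ((LinearMap.adjoint (p l i)) ∘ₗ (p l j) : Module.End ℂ Vρ)
            = ((w l : ℂ) ^ q) • (((w l : ℂ)) •
              ((LinearMap.adjoint (p l i)) ∘ₗ (p l j) : Module.End ℂ Vρ)) := by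
              rw [smul_smul, ← pow_succ]
          _ = ((w l : ℂ) ^ q) •
              ∑ k : Fin n, ((LinearMap.adjoint (p l i)) ∘ₗ (p l k) : Module.End ℂ Vρ) ∘ₗ πρ k j := by
              rw [h1]
          _ = ∑ k : Fin n, (((w l : ℂ) ^ q) •
              ((LinearMap.adjoint (p l i)) ∘ₗ (p l k) : Module.End ℂ Vρ)) ∘ₗ πρ k j := by
              rw [Finset.smul_sum]
              exact Finset.sum_congr rfl fun k _ => by ext x; simp
      calc (∑ l, ((w l : ℂ) ^ (q + 1)) •
            ((LinearMap.adjoint (p l i)) ∘ₗ (p l j)) : Module.End ℂ Vρ)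
          = ∑ l, ∑ k : Fin n, (((w l : ℂ) ^ q) •
            ((LinearMap.adjoint (p l i)) ∘ₗ (p l k) : Module.End ℂ Vρ)) ∘ₗ πρ k j :=
            Finset.sum_congr rfl fun l _ => key l
        _ = ∑ k : Fin n, (∑ l, ((w l : ℂ) ^ q) •
            ((LinearMap.adjoint (p l i)) ∘ₗ (p l k) : Module.End ℂ Vρ)) ∘ₗ πρ k j := by
            rw [Finset.sum_comm]
            refine Finset.sum_congr rfl fun k _ => ?_
            ext x ; simp
        _ = ∑ k : Fin n, epow πρ q i k ∘ₗ πρ k j := by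
            exact Finset.sum_congr rfl fun k _ => by rw [ih]
        _ = epow πρ (q + 1) i j := by
            rw [epow_succ_right]
            rfl
  refine ⟨main, fun q => ?_⟩
  calc (∑ l, ((w l : ℂ) ^ q) •
        (∑ i : Fin n, (LinearMap.adjoint (p l i)) ∘ₗ (p l i)) : Module.End ℂ Vρ)
      = ∑ l, ∑ i : Fin n, ((w l : ℂ) ^ q) •
        ((LinearMap.adjoint (p l i)) ∘ₗ (p l i) : Module.End ℂ Vρ) := by
        exact Finset.sum_congr rfl fun l _ => Finset.smul_sum
    _ = ∑ i : Fin n, ∑ l, ((w l : ℂ) ^ q) •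
        ((LinearMap.adjoint (p l i)) ∘ₗ (p l i) : Module.End ℂ Vρ) := by rw [Finset.sum_comm]
    _ = ∑ i : Fin n, epow πρ q i i := Finset.sum_congr rfl fun i _ => main q i i
end
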